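/- Let H be a locally profinite group (a topological group with a basis of neighborhoods of 1 consisting of compact open subgroups) and J a closed subgroup. Then the quotient map H → J\H admits a continuous section. -/

import Mathlib

open scoped Pointwise
set_option linter.unusedSectionVars false
set_option linter.unusedVariables false
set_option maxHeartbeats 1000000

namespace Stmt13Aux

variable {H : Type*} [Group H] [TopologicalSpace H] [IsTopologicalGroup H]

/-- The subgroup of elements topologically indistinguishable from `1`. -/
def zSub (H : Type*) [Group H] [TopologicalSpace H] [IsTopologicalGroup H] : Subgroup H where
  carrier := {z | ∀ U : Set H, IsOpen U → (1 : H) ∈ U → z ∈ U}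
  one_mem' := fun _ _ h1 => h1
  mul_mem' := by
    intro a b ha hb U hU h1
    have hb' := hb {w | a * w ∈ U} (hU.preimage (continuous_const.mul continuous_id))
      (by simpa using ha U hU h1)
    simpa using hb'
  inv_mem' := by
    intro a ha U hU h1
    have := ha {w | w⁻¹ ∈ U} (hU.preimage continuous_inv) (by simpa using h1)
    simpa using this

lemma zSub_mul_mem {z w : H} (hz : z ∈ zSub H) {U : Set H} (hU : IsOpen U) (hw : w ∈ U) :
    z * w ∈ U := by
  have := hz {v | v * w ∈ U} (hU.preimage (continuous_id.mul continuous_const)) (by simpa using hw)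
  simpa using this

lemma zSub_le_closed {J : Subgroup H} (hJ : IsClosed (J : Set H)) : zSub H ≤ J := by
  intro z hz
  by_contra hzJ
  have h1 : (1 : H) ∈ {w | z * w⁻¹ ∈ (↑J : Set H)ᶜ} := by simpa using hzJ
  have := hz _ ((hJ.isOpen_compl).preimage (continuous_const.mul continuous_inv)) h1
  simp at this

lemma zSub_conj {z : H} (hz : z ∈ zSub H) (g : H) : g * z * g⁻¹ ∈ zSub H := by
  intro U hU h1
  have := hz {w | g * w * g⁻¹ ∈ U}
    (hU.preimage (by continuity)) (by simpa using h1)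
  simpa using this

lemma mem_conjMap (g x : H) (N : Subgroup H) :
    x ∈ N.map (MulAut.conj g).toMonoidHom ↔ g⁻¹ * x * g ∈ N := by
  constructor
  · rintro ⟨n, hn, rfl⟩
    simpa [MulAut.conj_apply, mul_assoc] using hn
  · intro h
    exact ⟨g⁻¹ * x * g, h, by simp [MulAut.conj_apply]; group⟩

lemma coe_conjMap (g : H) (N : Subgroup H) :
    (↑(N.map (MulAut.conj g).toMonoidHom) : Set H) = (fun x => g * x * g⁻¹) '' (N : Set H) := by
  rw [Subgroup.coe_map]
  congr 1

lemma conj_homeo_eq (g : H) :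
    ⇑((Homeomorph.mulLeft g).trans (Homeomorph.mulRight g⁻¹)) = fun x => g * x * g⁻¹ := by
  funext x; rfl

lemma isOpen_conj (g : H) {s : Set H} (h : IsOpen s) : IsOpen ((fun x => g * x * g⁻¹) '' s) := by
  rw [← conj_homeo_eq g]
  exact ((Homeomorph.mulLeft g).trans (Homeomorph.mulRight g⁻¹)).isOpenMap s h

lemma isClosed_conj (g : H) {s : Set H} (h : IsClosed s) : IsClosed ((fun x => g * x * g⁻¹) '' s) := by
  rw [← conj_homeo_eq g]
  exact ((Homeomorph.mulLeft g).trans (Homeomorph.mulRight g⁻¹)).isClosedMap s h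

/-- A compact open subgroup contained in `Nd` which is normalized by all of `K`. -/
lemma exists_normalCore (K : Subgroup H) (hKc : IsCompact (K : Set H))
    (Nd : Subgroup H) (hNdc : IsCompact (Nd : Set H)) (hNdo : IsOpen (Nd : Set H))
    (hNdK : Nd ≤ K) :
    ∃ N1 : Subgroup H, IsCompact (N1 : Set H) ∧ IsOpen (N1 : Set H) ∧ N1 ≤ Nd ∧
      ∀ k ∈ K, ∀ n ∈ N1, k * n * k⁻¹ ∈ N1 := by
  classical
  set C : ↥K → Set H := fun i => {w | (↑i)⁻¹ * w ∈ Nd} with hC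
  have hCopen : ∀ i, IsOpen (C i) := fun i =>
    hNdo.preimage (continuous_const.mul continuous_id)
  have hcover : (K : Set H) ⊆ ⋃ i, C i := by
    intro k hk
    exact Set.mem_iUnion.2 ⟨⟨k, hk⟩, by simp [hC, Nd.one_mem]⟩
  obtain ⟨tf, htf⟩ := hKc.elim_finite_subcover C hCopen hcover
  set tf' : Finset ↥K := insert ⟨1, K.one_mem⟩ tf with htf'
  set F : ↥K → Subgroup H := fun i => Nd.map (MulAut.conj (↑i : H)).toMonoidHom with hF
  set N1 : Subgroup H := ⨅ i : ↥tf', F ↑i with hN1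
  have hmemN1 : ∀ x : H, x ∈ N1 ↔ ∀ i : ↥tf', (↑(↑i : ↥K) : H)⁻¹ * x * ↑(↑i : ↥K) ∈ Nd := by
    intro x
    rw [hN1, Subgroup.mem_iInf]
    exact forall_congr' fun i => mem_conjMap _ _ _
  have hcoe : (N1 : Set H) = ⋂ i : ↥tf', (↑(F ↑i) : Set H) := by
    rw [hN1, Subgroup.coe_iInf]
  have hN1Nd : N1 ≤ Nd := by
    intro x hx
    have := (hmemN1 x).1 hx ⟨⟨1, K.one_mem⟩, Finset.mem_insert_self _ _⟩
    simpa using this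
  have hNdcl : IsClosed (Nd : Set H) := Subgroup.isClosed_of_isOpen Nd hNdo
  have hopen : IsOpen (N1 : Set H) := by
    rw [hcoe]
    exact isOpen_iInter_of_finite fun i => by
      rw [hF, coe_conjMap]; exact isOpen_conj _ hNdo
  have hclosed : IsClosed (N1 : Set H) := by
    rw [hcoe]
    exact isClosed_iInter fun i => by
      rw [hF, coe_conjMap]; exact isClosed_conj _ hNdcl
  refine ⟨N1, hKc.of_isClosed_subset hclosed (fun x hx => hNdK (hN1Nd hx)), hopen, hN1Nd, ?_⟩
  intro k hk n hn
  rw [hmemN1]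
  intro i
  have hw : (k⁻¹ * ↑(↑i : ↥K) : H) ∈ (K : Set H) := K.mul_mem (K.inv_mem hk) (↑i : ↥K).2
  have := htf hw
  rw [Set.mem_iUnion₂] at this
  obtain ⟨i', hi't, hi'⟩ := this
  have hm : (↑i' : H)⁻¹ * (k⁻¹ * ↑(↑i : ↥K)) ∈ Nd := hi'
  set m : H := (↑i' : H)⁻¹ * (k⁻¹ * ↑(↑i : ↥K)) with hmdef
  have hn' : (↑i' : H)⁻¹ * n * ↑i' ∈ Nd := by
    have := (hmemN1 n).1 hn ⟨i', Finset.mem_insert_of_mem hi't⟩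
    exact this
  have key : (↑(↑i : ↥K) : H)⁻¹ * (k * n * k⁻¹) * ↑(↑i : ↥K)
      = m⁻¹ * ((↑i' : H)⁻¹ * n * ↑i') * m := by
    rw [hmdef]; group
  rw [key]
  exact Nd.mul_mem (Nd.mul_mem (Nd.inv_mem hm) hn') hm

/-- A partial stage in the Zorn argument for constructing a continuous section
of `L\K`: `t` realizes a continuous section of `S\K → L\K`. -/
structure Stage (K L S : Subgroup H) (t : H → H) : Prop where
  hSL : S ≤ L
  hScl : IsClosed (S : Set H)
  ht1 : ∀ k ∈ K, t k * k⁻¹ ∈ L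
  ht2 : ∀ k ∈ K, ∀ k' ∈ K, k' * k⁻¹ ∈ L → t k' * (t k)⁻¹ ∈ S
  ht3 : ∀ k ∈ K, ∀ N : Subgroup H, IsCompact (N : Set H) → IsOpen (N : Set H) → N ≤ K →
      ∃ N' : Subgroup H, IsCompact (N' : Set H) ∧ IsOpen (N' : Set H) ∧ N' ≤ K ∧
        ∀ n' ∈ N', ∃ s ∈ S, ∃ n ∈ N, t (k * n') = s * t k * n

lemma Stage.tmem {K L S : Subgroup H} {t : H → H} (hst : Stage K L S t) (hLK : L ≤ K)
    {k : H} (hk : k ∈ K) : t k ∈ K := by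
  have h := hLK (hst.ht1 k hk)
  have : t k = t k * k⁻¹ * k := by group
  rw [this]
  exact K.mul_mem h hk

/-- Uniform continuity of a stage function, by compactness of `K`. -/
lemma Stage.uniform {K L S : Subgroup H} {t : H → H} (hst : Stage K L S t)
    (hKc : IsCompact (K : Set H))
    (N1 : Subgroup H) (h1c : IsCompact (N1 : Set H)) (h1o : IsOpen (N1 : Set H))
    (h1K : N1 ≤ K) :
    ∃ N : Subgroup H, IsCompact (N : Set H) ∧ IsOpen (N : Set H) ∧ N ≤ N1 ∧
      ∀ k ∈ K, ∀ n ∈ N, ∃ s ∈ S, ∃ m ∈ N1, t (k * n) = s * t k * m := by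
  classical
  choose N' hN'c hN'o hN'K hprop using fun i : ↥K => hst.ht3 ↑i i.2 N1 h1c h1o h1K
  set C : ↥K → Set H := fun i => {w | (↑i)⁻¹ * w ∈ N' i} with hC
  have hCopen : ∀ i, IsOpen (C i) := fun i => (hN'o i).preimage (continuous_const.mul continuous_id)
  have hcover : (K : Set H) ⊆ ⋃ i, C i := fun k hk =>
    Set.mem_iUnion.2 ⟨⟨k, hk⟩, by simp [hC, (N' _).one_mem]⟩
  obtain ⟨tf, htf⟩ := hKc.elim_finite_subcover C hCopen hcover
  set N : Subgroup H := (⨅ i : ↥tf, N' ↑i) ⊓ N1 with hN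
  have hNN1 : N ≤ N1 := inf_le_right
  have hNle : ∀ (i : ↥tf), N ≤ N' ↑i := fun i =>
    le_trans inf_le_left (iInf_le _ i)
  have hNcoe : (N : Set H) = (⋂ i : ↥tf, (↑(N' ↑i) : Set H)) ∩ N1 := by
    rw [hN, Subgroup.coe_inf, Subgroup.coe_iInf]
  have hNo : IsOpen (N : Set H) := by
    rw [hNcoe]
    exact (isOpen_iInter_of_finite fun i => hN'o _).inter h1o
  have hNcl : IsClosed (N : Set H) := by
    rw [hNcoe]
    exact (isClosed_iInter fun i => Subgroup.isClosed_of_isOpen _ (hN'o _)).inter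
      (Subgroup.isClosed_of_isOpen _ h1o)
  have hNc : IsCompact (N : Set H) :=
    h1c.of_isClosed_subset hNcl (fun x hx => hNN1 hx)
  refine ⟨N, hNc, hNo, hNN1, ?_⟩
  intro k hk n hn
  obtain ⟨i, hit, hi⟩ := Set.mem_iUnion₂.1 (htf hk)
  set n' : H := (↑i : H)⁻¹ * k with hn'def
  have hn'mem : n' ∈ N' i := hi
  have hkeq : (↑i : H) * n' = k := by rw [hn'def]; group
  have hn'n : n' * n ∈ N' i := (N' i).mul_mem hn'mem (hNle ⟨i, hit⟩ hn)
  obtain ⟨s1, hs1, m1, hm1, he1⟩ := hprop i n' hn'mem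
  obtain ⟨s2, hs2, m2, hm2, he2⟩ := hprop i (n' * n) hn'n
  rw [hkeq] at he1
  have he2' : t (k * n) = s2 * t ↑i * m2 := by
    rw [← hkeq, mul_assoc]; exact he2
  refine ⟨s2 * s1⁻¹, S.mul_mem hs2 (S.inv_mem hs1), m1⁻¹ * m2,
    N1.mul_mem (N1.inv_mem hm1) hm2, ?_⟩
  rw [he2', he1]
  group


lemma descend {K L S : Subgroup H} {t : H → H} (hKc : IsCompact (K : Set H))
    (hLK : L ≤ K) (hst : Stage K L S t)
    {Nd : Subgroup H} (hNdc : IsCompact (Nd : Set H)) (hNdo : IsOpen (Nd : Set H))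
    (hNdK : Nd ≤ K) :
    ∃ S' : Subgroup H, ∃ t' : H → H, Stage K L S' t' ∧ S' ≤ S ∧ S' ≤ Nd ∧
      ∀ k ∈ K, t' k * (t k)⁻¹ ∈ S := by
  classical
  obtain ⟨N1, h1c, h1o, h1Nd, h1norm⟩ := exists_normalCore K hKc Nd hNdc hNdo hNdK
  have h1K : N1 ≤ K := h1Nd.trans hNdK
  obtain ⟨N, hNc, hNo, hNN1, huc⟩ := hst.uniform hKc N1 h1c h1o h1K
  have hNK : N ≤ K := hNN1.trans h1K
  let sd : Setoid H :=
    { r := fun x y => ∃ l ∈ L, ∃ n ∈ N, y = l * x * n,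
      iseqv := by
        refine ⟨fun x => ⟨1, L.one_mem, 1, N.one_mem, by group⟩, ?_, ?_⟩
        · rintro x y ⟨l, hl, n, hn, rfl⟩
          exact ⟨l⁻¹, L.inv_mem hl, n⁻¹, N.inv_mem hn, by group⟩
        · rintro x y z ⟨l, hl, n, hn, rfl⟩ ⟨l', hl', n', hn', rfl⟩
          exact ⟨l' * l, L.mul_mem hl' hl, n * n', N.mul_mem hn hn', by group⟩ }
  set b : H → H := fun x => (Quotient.mk sd x).out with hbdef
  have hbr : ∀ x : H, ∃ l ∈ L, ∃ n ∈ N, x = l * b x * n := fun x =>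
    Quotient.exact (Quotient.out_eq (Quotient.mk sd x))
  have hbc : ∀ x y : H, (∃ l ∈ L, ∃ n ∈ N, y = l * x * n) → b x = b y := fun x y h =>
    congrArg Quotient.out (Quotient.sound h)
  have hdel : ∀ k : H, ∃ s, s ∈ S ∧ (k ∈ K → ∃ m ∈ N1, t (b k) = s * t k * m) := by
    intro k
    by_cases hk : k ∈ K
    · obtain ⟨l, hl, n, hn, he⟩ := hbr k
      set B := b k with hB
      have hk2 : k * n⁻¹ ∈ K := K.mul_mem hk (K.inv_mem (hNK hn))
      have hbk' : B = l⁻¹ * (l * B * n) * n⁻¹ := by group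
      have hbkK : B ∈ K := by
        rw [hbk', ← he]
        exact K.mul_mem (K.mul_mem (K.inv_mem (hLK hl)) hk) (K.inv_mem (hNK hn))
      have hrel : B * (k * n⁻¹)⁻¹ ∈ L := by
        have h9 : B * ((l * B * n) * n⁻¹)⁻¹ = l⁻¹ := by group
        rw [← he] at h9
        rw [h9]; exact L.inv_mem hl
      have hs1 := hst.ht2 (k * n⁻¹) hk2 B hbkK hrel
      obtain ⟨s2, hs2, m2, hm2, he2⟩ := huc k hk n⁻¹ (N.inv_mem hn)
      refine ⟨t B * (t (k * n⁻¹))⁻¹ * s2, S.mul_mem hs1 hs2, fun _ => ⟨m2, hm2, ?_⟩⟩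
      rw [he2]; group
    · exact ⟨1, S.one_mem, fun h => absurd h hk⟩
  choose δ hδS hδm using hdel
  set t' : H → H := fun k => δ k * t k with ht'def
  have hδK : ∀ k : H, δ k ∈ K := fun k => hLK (hst.hSL (hδS k))
  refine ⟨S ⊓ N1, t', ⟨inf_le_left.trans hst.hSL, ?_, ?_, ?_, ?_⟩, inf_le_left,
    le_trans inf_le_right h1Nd, fun k hk => ?_⟩
  · rw [Subgroup.coe_inf]
    exact hst.hScl.inter (Subgroup.isClosed_of_isOpen N1 h1o)
  · intro k hk
    have : t' k * k⁻¹ = δ k * (t k * k⁻¹) := by simp only [ht'def]; group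
    rw [this]
    exact L.mul_mem (hst.hSL (hδS k)) (hst.ht1 k hk)
  · intro k hk k' hk' hkk'
    have hbk : b k = b k' := hbc k k' ⟨k' * k⁻¹, hkk', 1, N.one_mem, by group⟩
    obtain ⟨m, hm, he⟩ := hδm k hk
    obtain ⟨m', hm', he'⟩ := hδm k' hk'
    rw [← hbk] at he'
    have σmem : t k' * (t k)⁻¹ ∈ S := hst.ht2 k hk k' hk' hkk'
    have hA : δ k = t (b k) * m⁻¹ * (t k)⁻¹ := by rw [he]; group
    have hB : δ k' = t (b k) * m'⁻¹ * (t k')⁻¹ := by rw [he']; group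
    have key : (δ k)⁻¹ * (δ k' * (t k' * (t k)⁻¹)) = t k * (m * m'⁻¹) * (t k)⁻¹ := by
      rw [hA, hB]; group
    have goal_eq : t' k' * (t' k)⁻¹ = δ k' * t k' * (δ k * t k)⁻¹ := by
      simp only [ht'def]
    rw [goal_eq]
    rw [Subgroup.mem_inf]
    constructor
    · have e1 : δ k' * t k' * (δ k * t k)⁻¹ = δ k' * (t k' * (t k)⁻¹) * (δ k)⁻¹ := by group
      rw [e1]
      exact S.mul_mem (S.mul_mem (hδS k') σmem) (S.inv_mem (hδS k))
    · have e2 : δ k' * t k' * (δ k * t k)⁻¹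
          = δ k * ((δ k)⁻¹ * (δ k' * (t k' * (t k)⁻¹))) * (δ k)⁻¹ := by group
      rw [e2, key]
      exact h1norm (δ k) (hδK k) _
        (h1norm (t k) (hst.tmem hLK hk) _ (N1.mul_mem hm (N1.inv_mem hm')))
  · intro k hk N2 h2c h2o h2K
    have h4c : IsCompact ((N1 ⊓ N2 : Subgroup H) : Set H) := by
      refine h1c.of_isClosed_subset ?_ ?_
      · rw [Subgroup.coe_inf]
        exact (Subgroup.isClosed_of_isOpen N1 h1o).inter (Subgroup.isClosed_of_isOpen N2 h2o)
      · exact fun x hx => (Subgroup.mem_inf.1 hx).1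
    have h4o : IsOpen ((N1 ⊓ N2 : Subgroup H) : Set H) := by
      rw [Subgroup.coe_inf]; exact h1o.inter h2o
    obtain ⟨N5, h5c, h5o, h5N4, huc5⟩ := hst.uniform hKc (N1 ⊓ N2) h4c h4o
      (inf_le_left.trans h1K)
    refine ⟨N5 ⊓ N, ?_, ?_, inf_le_right.trans hNK, ?_⟩
    · refine hNc.of_isClosed_subset ?_ (fun x hx => (Subgroup.mem_inf.1 hx).2)
      rw [Subgroup.coe_inf]
      exact (Subgroup.isClosed_of_isOpen N5 h5o).inter (Subgroup.isClosed_of_isOpen N hNo)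
    · rw [Subgroup.coe_inf]; exact h5o.inter hNo
    · intro n3 hn3
      obtain ⟨hn3N5, hn3N⟩ := Subgroup.mem_inf.1 hn3
      have hkn3K : k * n3 ∈ K := K.mul_mem hk (hNK hn3N)
      have hbeq : b (k * n3) = b k :=
        (hbc k (k * n3) ⟨1, L.one_mem, n3, hn3N, by group⟩).symm
      obtain ⟨m, hm, he⟩ := hδm k hk
      obtain ⟨m'', hm'', he''⟩ := hδm (k * n3) hkn3K
      rw [hbeq] at he''
      obtain ⟨s5, hs5, m4, hm4, he5⟩ := huc5 k hk n3 hn3N5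
      obtain ⟨hm4N1, hm4N2⟩ := Subgroup.mem_inf.1 hm4
      have hA : δ k = t (b k) * m⁻¹ * (t k)⁻¹ := by rw [he]; group
      have hB : δ (k * n3) = t (b k) * m''⁻¹ * (t (k * n3))⁻¹ := by rw [he'']; group
      have key2 : (δ k)⁻¹ * (δ (k * n3) * s5) = t k * (m * m''⁻¹ * m4⁻¹) * (t k)⁻¹ := by
        rw [hA, hB, he5]; group
      have hwS : (δ k)⁻¹ * (δ (k * n3) * s5) ∈ S :=
        S.mul_mem (S.inv_mem (hδS k)) (S.mul_mem (hδS _) hs5)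
      have hwN1 : (δ k)⁻¹ * (δ (k * n3) * s5) ∈ N1 := by
        rw [key2]
        exact h1norm (t k) (hst.tmem hLK hk) _
          (N1.mul_mem (N1.mul_mem hm (N1.inv_mem hm'')) (N1.inv_mem hm4N1))
      refine ⟨δ k * ((δ k)⁻¹ * (δ (k * n3) * s5)) * (δ k)⁻¹,
        Subgroup.mem_inf.2 ⟨S.mul_mem (S.mul_mem (hδS k) hwS) (S.inv_mem (hδS k)),
          h1norm (δ k) (hδK k) _ hwN1⟩, m4, hm4N2, ?_⟩
      show t' (k * n3) = δ k * ((δ k)⁻¹ * (δ (k * n3) * s5)) * (δ k)⁻¹ * t' k * m4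
      simp only [ht'def]
      rw [he5]; group
  · have : t' k * (t k)⁻¹ = δ k := by simp only [ht'def]; group
    rw [this]; exact hδS k

/-- The core theorem: a continuous-up-to-indistinguishability section of `L\K`
for a compact subgroup `K` with a basis of compact open subgroups. -/
theorem exists_core_section (K : Subgroup H) (hKc : IsCompact (K : Set H))
    (hbasis : ∀ U ∈ nhds (1 : H), ∃ N : Subgroup H,
      IsCompact (N : Set H) ∧ IsOpen (N : Set H) ∧ N ≤ K ∧ (N : Set H) ⊆ U)
    (L : Subgroup H) (hLcl : IsClosed (L : Set H)) (hLK : L ≤ K) :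
    ∃ t : H → H, (∀ k ∈ K, t k * k⁻¹ ∈ L) ∧
      (∀ k ∈ K, ∀ k' ∈ K, k' * k⁻¹ ∈ L → t k' * (t k)⁻¹ ∈ zSub H) ∧
      (∀ k ∈ K, ∀ N : Subgroup H, IsCompact (N : Set H) → IsOpen (N : Set H) → N ≤ K →
        ∃ N' : Subgroup H, IsCompact (N' : Set H) ∧ IsOpen (N' : Set H) ∧ N' ≤ K ∧
          ∀ n' ∈ N', ∃ z ∈ zSub H, ∃ n ∈ N, t (k * n') = z * t k * n) := by
  classical
  let α := {p : Subgroup H × (H → H) // Stage K L p.1 p.2}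
  let rr : α → α → Prop := fun a b =>
    b.1.1 ≤ a.1.1 ∧ ∀ k ∈ K, b.1.2 k * (a.1.2 k)⁻¹ ∈ a.1.1
  have htrans : ∀ {a b c : α}, rr a b → rr b c → rr a c := by
    intro a b c hab hbc
    refine ⟨hbc.1.trans hab.1, fun k hk => ?_⟩
    have h1 := hab.1 (hbc.2 k hk)
    have h2 := hab.2 k hk
    have h3 := a.1.1.mul_mem h1 h2
    have e : c.1.2 k * (b.1.2 k)⁻¹ * (b.1.2 k * (a.1.2 k)⁻¹) = c.1.2 k * (a.1.2 k)⁻¹ := by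
      group
    rwa [e] at h3
  have hbase : Stage K L L id := by
    refine ⟨le_refl L, hLcl, fun k hk => ?_, fun k hk k' hk' h => by simpa using h,
      fun k hk N hNc hNo hNK => ⟨N, hNc, hNo, hNK, fun n' hn' =>
        ⟨1, L.one_mem, n', hn', by simp⟩⟩⟩
    simpa using L.one_mem
  have hchains : ∀ c : Set α, IsChain rr c → ∃ ub, ∀ a ∈ c, rr a ub := by
    intro c hc
    by_cases hne : c.Nonempty
    · haveI : Nonempty ↥c := hne.to_subtype
      set X : ↥c → H → Set H :=
        fun i k => (fun s => s * ((↑i : α).1.2 k)) '' (((↑i : α).1.1 : Set H)) with hX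
      have hXmem : ∀ (i : ↥c) (k w : H),
          w ∈ X i k ↔ ∃ s ∈ (↑i : α).1.1, w = s * (↑i : α).1.2 k := by
        intro i k w
        constructor
        · rintro ⟨s, hs, rfl⟩; exact ⟨s, hs, rfl⟩
        · rintro ⟨s, hs, rfl⟩; exact ⟨s, hs, rfl⟩
      have hXne : ∀ (i : ↥c) (k : H), (X i k).Nonempty := fun i k =>
        ⟨_, ⟨1, (↑i : α).1.1.one_mem, rfl⟩⟩
      have hScomp : ∀ i : ↥c, IsCompact (((↑i : α).1.1 : Set H)) := fun i =>
        hKc.of_isClosed_subset (↑i : α).2.hScl (fun x hx => hLK ((↑i : α).2.hSL hx))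
      have hXcomp : ∀ (i : ↥c) (k : H), IsCompact (X i k) := fun i k =>
        (hScomp i).image (continuous_id.mul continuous_const)
      have hXcl : ∀ (i : ↥c) (k : H), IsClosed (X i k) := by
        intro i k
        have e : X i k = (Homeomorph.mulRight ((↑i : α).1.2 k)) '' (((↑i : α).1.1 : Set H)) := rfl
        rw [e]
        exact (Homeomorph.mulRight _).isClosedMap _ ((↑i : α).2.hScl)
      have hmono : ∀ (a b : ↥c), rr ↑a ↑b → ∀ k ∈ K, X b k ⊆ X a k := by
        intro a b hab k hk w hw
        obtain ⟨s, hs, rfl⟩ := (hXmem b k w).1 hw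
        refine (hXmem a k _).2 ⟨s * ((↑b : α).1.2 k * ((↑a : α).1.2 k)⁻¹),
          (↑a : α).1.1.mul_mem (hab.1 hs) (hab.2 k hk), by group⟩
      have hdir : ∀ k, k ∈ K → Directed (fun x1 x2 : Set H => x1 ⊇ x2) (fun i => X i k) := by
        intro k hk i j
        by_cases hij : i = j
        · exact ⟨i, subset_refl _, by rw [hij]⟩
        · have hne' : (↑i : α) ≠ ↑j := fun h => hij (Subtype.ext h)
          rcases hc i.2 j.2 hne' with h | h
          · exact ⟨j, hmono i j h k hk, subset_refl _⟩
          · exact ⟨i, subset_refl _, hmono j i h k hk⟩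
      have hV : ∀ k, k ∈ K → (⋂ i, X i k).Nonempty := by
        intro k hk
        exact IsCompact.nonempty_iInter_of_directed_nonempty_isCompact_isClosed _
          (hdir k hk) (fun i => hXne i k) (fun i => hXcomp i k) (fun i => hXcl i k)
      set tinf : H → H := fun k => if h : k ∈ K then (hV k h).some else k with htinf
      have htX : ∀ k, ∀ hk : k ∈ K, ∀ i : ↥c, tinf k ∈ X i k := by
        intro k hk i
        have h1 : tinf k ∈ ⋂ i, X i k := by
          simp only [htinf]; rw [dif_pos hk]; exact (hV k hk).some_mem
        exact Set.mem_iInter.1 h1 i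
      set Sinf : Subgroup H := ⨅ i : ↥c, (↑i : α).1.1 with hSinf
      obtain ⟨i0, hi0⟩ := hne
      have hstage : Stage K L Sinf tinf := by
        refine ⟨?_, ?_, ?_, ?_, ?_⟩
        · exact (iInf_le (fun i : ↥c => (↑i : α).1.1) ⟨i0, hi0⟩).trans
            ((⟨i0, hi0⟩ : ↥c) : α).2.hSL
        · rw [hSinf, Subgroup.coe_iInf]
          exact isClosed_iInter fun i => (↑i : α).2.hScl
        · intro k hk
          obtain ⟨s, hs, he⟩ := (hXmem ⟨i0, hi0⟩ k _).1 (htX k hk ⟨i0, hi0⟩)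
          rw [he, mul_assoc]
          exact L.mul_mem (((⟨i0, hi0⟩ : ↥c) : α).2.hSL hs)
            (((⟨i0, hi0⟩ : ↥c) : α).2.ht1 k hk)
        · intro k hk k' hk' hrel
          rw [Subgroup.mem_iInf]
          intro i
          obtain ⟨s1, hs1, he1⟩ := (hXmem i k' _).1 (htX k' hk' i)
          obtain ⟨s2, hs2, he2⟩ := (hXmem i k _).1 (htX k hk i)
          have hσ := (↑i : α).2.ht2 k hk k' hk' hrel
          have e : tinf k' * (tinf k)⁻¹
              = s1 * ((↑i : α).1.2 k' * ((↑i : α).1.2 k)⁻¹) * s2⁻¹ := by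
            rw [he1, he2]; group
          rw [e]
          exact (↑i : α).1.1.mul_mem ((↑i : α).1.1.mul_mem hs1 hσ) ((↑i : α).1.1.inv_mem hs2)
        · intro k hk N hNc2 hNo2 hNK2
          set U : Set H := ((Sinf : Set H) * {tinf k}) * (N : Set H) with hU
          have hUo : IsOpen U := IsOpen.mul_left hNo2
          have hex : ∃ i : ↥c, X i k ⊆ U := by
            by_contra hno
            push_neg at hno
            have hDne : ∀ i : ↥c, (X i k \ U).Nonempty := by
              intro i
              obtain ⟨a, ha, hna⟩ := Set.not_subset.1 (hno i)
              exact ⟨a, ha, hna⟩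
            have hDdir : Directed (fun x1 x2 : Set H => x1 ⊇ x2) (fun i => X i k \ U) := by
              intro i j
              obtain ⟨m, h1, h2⟩ := hdir k hk i j
              exact ⟨m, fun x hx => ⟨h1 hx.1, hx.2⟩, fun x hx => ⟨h2 hx.1, hx.2⟩⟩
            obtain ⟨v, hv⟩ :=
              IsCompact.nonempty_iInter_of_directed_nonempty_isCompact_isClosed _
                hDdir hDne (fun i => (hXcomp i k).diff hUo)
                (fun i => (hXcl i k).sdiff hUo)
            rw [Set.mem_iInter] at hv
            have hvV : ∀ i, v ∈ X i k := fun i => (hv i).1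
            have hvU : v ∉ U := (hv ⟨i0, hi0⟩).2
            have hvz : v * (tinf k)⁻¹ ∈ Sinf := by
              rw [Subgroup.mem_iInf]
              intro i
              obtain ⟨s1, hs1, he1⟩ := (hXmem i k v).1 (hvV i)
              obtain ⟨s2, hs2, he2⟩ := (hXmem i k _).1 (htX k hk i)
              have e : v * (tinf k)⁻¹ = s1 * s2⁻¹ := by rw [he1, he2]; group
              rw [e]
              exact (↑i : α).1.1.mul_mem hs1 ((↑i : α).1.1.inv_mem hs2)
            refine hvU ?_
            have e : v = ((v * (tinf k)⁻¹) * tinf k) * 1 := by group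
            rw [e]
            exact Set.mul_mem_mul (Set.mul_mem_mul hvz (Set.mem_singleton _)) N.one_mem
          obtain ⟨i, hiU⟩ := hex
          obtain ⟨N', h'c, h'o, h'K, hprop⟩ := (↑i : α).2.ht3 k hk N hNc2 hNo2 hNK2
          refine ⟨N', h'c, h'o, h'K, ?_⟩
          intro n' hn'
          have hkn' : k * n' ∈ K := K.mul_mem hk (h'K hn')
          obtain ⟨s4, hs4, he4⟩ := (hXmem i (k * n') _).1 (htX (k * n') hkn' i)
          obtain ⟨s, hs, n, hn, he⟩ := hprop n' hn'
          have hm : s4 * s * ((↑i : α).1.2 k) ∈ U :=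
            hiU ((hXmem i k _).2 ⟨s4 * s, (↑i : α).1.1.mul_mem hs4 hs, rfl⟩)
          obtain ⟨a, ha, n5, hn5, hae⟩ := Set.mem_mul.1 hm
          obtain ⟨z, hz, tt, htt, haz⟩ := Set.mem_mul.1 ha
          rw [Set.mem_singleton_iff] at htt
          subst htt
          refine ⟨z, hz, n5 * n, N.mul_mem hn5 hn, ?_⟩
          have e5 : z * tinf k * n5 = s4 * s * ((↑i : α).1.2 k) := by rw [haz, hae]
          rw [he4, he]
          have target : s4 * (s * ((↑i : α).1.2 k) * n) = (s4 * s * ((↑i : α).1.2 k)) * n := by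
            group
          rw [target, ← e5]
          group
      refine ⟨⟨(Sinf, tinf), hstage⟩, ?_⟩
      intro a ha
      constructor
      · exact iInf_le (fun i : ↥c => (↑i : α).1.1) ⟨a, ha⟩
      · intro k hk
        obtain ⟨s, hs, he⟩ := (hXmem ⟨a, ha⟩ k _).1 (htX k hk ⟨a, ha⟩)
        show tinf k * (((⟨a, ha⟩ : ↥c) : α).1.2 k)⁻¹ ∈ ((⟨a, ha⟩ : ↥c) : α).1.1
        rw [he, mul_inv_cancel_right]
        exact hs
    · refine ⟨⟨(L, id), hbase⟩, ?_⟩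
      intro a ha
      exact absurd ⟨a, ha⟩ hne
  obtain ⟨m, hmax⟩ := exists_maximal_of_chains_bounded hchains (fun {a b c} => htrans)
  have hZ : ∀ x ∈ m.1.1, x ∈ zSub H := by
    intro x hx U hU h1
    obtain ⟨N, hNc, hNo, hNK, hNU⟩ := hbasis U (hU.mem_nhds h1)
    by_cases hle : m.1.1 ≤ N
    · exact hNU (hle hx)
    · exfalso
      obtain ⟨S', t', hst', hS'S, hS'N, hrel'⟩ := descend hKc hLK m.2 hNc hNo hNK
      have hr : rr m ⟨(S', t'), hst'⟩ := ⟨hS'S, hrel'⟩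
      have hback := hmax _ hr
      exact hle (hback.1.trans hS'N)
  refine ⟨m.1.2, m.2.ht1, fun k hk k' hk' h => hZ _ (m.2.ht2 k hk k' hk' h), ?_⟩
  intro k hk N hNc hNo hNK
  obtain ⟨N', h'c, h'o, h'K, hp⟩ := m.2.ht3 k hk N hNc hNo hNK
  refine ⟨N', h'c, h'o, h'K, fun n' hn' => ?_⟩
  obtain ⟨s, hs, n, hn, he⟩ := hp n' hn'
  exact ⟨s, hZ s hs, n, hn, he⟩

end Stmt13Aux

open Stmt13Aux

/-- The equivalence relation on `H` whose classes are the right cosets `Jx` of a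
subgroup `J`, so that the quotient is `J\H`. -/
def rightCosetSetoid {H : Type*} [Group H] (J : Subgroup H) : Setoid H where
  r x y := x * y⁻¹ ∈ J
  iseqv := by
    refine ⟨fun x => by simpa using J.one_mem, fun {x y} h => ?_, fun {x y z} h1 h2 => ?_⟩
    · have := J.inv_mem h
      simpa [mul_inv_rev] using this
    · have := J.mul_mem h1 h2
      simpa [mul_assoc] using this

/-- Let `H` be a locally profinite group (a topological group with a basis of
neighbourhoods of `1` consisting of compact open subgroups) and `J` a closed subgroup.
Then the quotient map `H → J\H` admits a continuous section. -/
theorem stmt13 {H : Type*} [Group H] [TopologicalSpace H] [IsTopologicalGroup H]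
    (hH : ∀ U ∈ nhds (1 : H), ∃ K : Subgroup H,
      IsCompact (K : Set H) ∧ IsOpen (K : Set H) ∧ (K : Set H) ⊆ U)
    (J : Subgroup H) (hJ : IsClosed (J : Set H)) :
    ∃ σ : Quotient (rightCosetSetoid J) → H,
      Continuous σ ∧ ∀ q : Quotient (rightCosetSetoid J),
        Quotient.mk (rightCosetSetoid J) (σ q) = q := by
  classical
  obtain ⟨K, hKc, hKo, -⟩ := hH Set.univ Filter.univ_mem
  have hKcl : IsClosed (K : Set H) := Subgroup.isClosed_of_isOpen K hKo
  have hbasis : ∀ U ∈ nhds (1 : H), ∃ N : Subgroup H,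
      IsCompact (N : Set H) ∧ IsOpen (N : Set H) ∧ N ≤ K ∧ (N : Set H) ⊆ U := by
    intro U hU
    obtain ⟨N, hNc, hNo, hNsub⟩ := hH (U ∩ K) (Filter.inter_mem hU (hKo.mem_nhds K.one_mem))
    exact ⟨N, hNc, hNo, fun x hx => (hNsub hx).2, fun x hx => (hNsub hx).1⟩
  let sd2 : Setoid H :=
    { r := fun x y => ∃ j ∈ J, ∃ k ∈ K, y = j * x * k,
      iseqv := by
        refine ⟨fun x => ⟨1, J.one_mem, 1, K.one_mem, by group⟩, ?_, ?_⟩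
        · rintro x y ⟨j, hj, k, hk, rfl⟩
          exact ⟨j⁻¹, J.inv_mem hj, k⁻¹, K.inv_mem hk, by group⟩
        · rintro x y z ⟨j, hj, k, hk, rfl⟩ ⟨j', hj', k', hk', rfl⟩
          exact ⟨j' * j, J.mul_mem hj' hj, k * k', K.mul_mem hk hk', by group⟩ }
  set cc : H → H := fun x => (Quotient.mk sd2 x).out with hccdef
  have hc1 : ∀ x : H, ∃ j ∈ J, ∃ k ∈ K, x = j * cc x * k := fun x =>
    Quotient.exact (Quotient.out_eq (Quotient.mk sd2 x))
  have hc2 : ∀ x y : H, (∃ j ∈ J, ∃ k ∈ K, y = j * x * k) → cc x = cc y := fun x y h =>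
    congrArg Quotient.out (Quotient.sound h)
  have hLmem : ∀ g u : H, u ∈ K ⊓ J.map (MulAut.conj g⁻¹).toMonoidHom ↔
      u ∈ K ∧ g * u * g⁻¹ ∈ J := by
    intro g u
    rw [Subgroup.mem_inf, mem_conjMap, inv_inv]
  have hLcl : ∀ g : H, IsClosed ((K ⊓ J.map (MulAut.conj g⁻¹).toMonoidHom : Subgroup H) : Set H) := by
    intro g
    rw [Subgroup.coe_inf, coe_conjMap]
    exact hKcl.inter (isClosed_conj _ hJ)
  have hcore : ∀ g : H, ∃ t : H → H,
      (∀ k ∈ K, t k * k⁻¹ ∈ K ⊓ J.map (MulAut.conj g⁻¹).toMonoidHom) ∧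
      (∀ k ∈ K, ∀ k' ∈ K, k' * k⁻¹ ∈ K ⊓ J.map (MulAut.conj g⁻¹).toMonoidHom →
        t k' * (t k)⁻¹ ∈ zSub H) ∧
      (∀ k ∈ K, ∀ N : Subgroup H, IsCompact (N : Set H) → IsOpen (N : Set H) → N ≤ K →
        ∃ N' : Subgroup H, IsCompact (N' : Set H) ∧ IsOpen (N' : Set H) ∧ N' ≤ K ∧
          ∀ n' ∈ N', ∃ z ∈ zSub H, ∃ n ∈ N, t (k * n') = z * t k * n) := fun g =>
    exists_core_section K hKc hbasis _ (hLcl g) inf_le_left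
  choose T hT1 hT2 hT3 using hcore
  have hkk : ∀ x : H, ∃ k, k ∈ K ∧ (cc x * k) * x⁻¹ ∈ J := by
    intro x
    obtain ⟨j, hj, k, hk, he⟩ := hc1 x
    refine ⟨k, hk, ?_⟩
    have hxinv : x⁻¹ = (j * cc x * k)⁻¹ := by rw [← he]
    have e : cc x * k * x⁻¹ = j⁻¹ := by rw [hxinv]; group
    rw [e]
    exact J.inv_mem hj
  choose kk hkkK hkkJ using hkk
  set τ : H → H := fun x => cc x * T (cc x) (kk x) with hτ
  set τ' : H → H := fun x => (Quotient.mk (rightCosetSetoid (zSub H)) (τ x)).out with hτ'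
  have hρ : ∀ w : H, (Quotient.mk (rightCosetSetoid (zSub H)) w).out * w⁻¹ ∈ zSub H := fun w =>
    Quotient.exact (Quotient.out_eq (Quotient.mk (rightCosetSetoid (zSub H)) w))
  have hρc : ∀ w w' : H, w * w'⁻¹ ∈ zSub H →
      (Quotient.mk (rightCosetSetoid (zSub H)) w).out
        = (Quotient.mk (rightCosetSetoid (zSub H)) w').out := fun w w' h =>
    congrArg Quotient.out (Quotient.sound h)
  have hLrel : ∀ g x y k k' : H, k ∈ K → k' ∈ K → (g * k) * x⁻¹ ∈ J → (g * k') * y⁻¹ ∈ J →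
      x * y⁻¹ ∈ J → k * k'⁻¹ ∈ K ⊓ J.map (MulAut.conj g⁻¹).toMonoidHom := by
    intro g x y k k' hk hk' h1 h2 h3
    rw [hLmem]
    refine ⟨K.mul_mem hk (K.inv_mem hk'), ?_⟩
    have e : (g * k * x⁻¹) * (x * y⁻¹) * (g * k' * y⁻¹)⁻¹ = g * (k * k'⁻¹) * g⁻¹ := by group
    rw [← e]
    exact J.mul_mem (J.mul_mem h1 h3) (J.inv_mem h2)
  have hconst : ∀ a b : H, a * b⁻¹ ∈ J → τ' a = τ' b := by
    intro a b hab
    have hca : cc b = cc a := hc2 b a ⟨a * b⁻¹, hab, 1, K.one_mem, by group⟩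
    have hJa : (cc b * kk a) * a⁻¹ ∈ J := by rw [hca]; exact hkkJ a
    have hL := hLrel (cc b) a b (kk a) (kk b) (hkkK a) (hkkK b) hJa (hkkJ b) hab
    have hz := hT2 (cc b) (kk b) (hkkK b) (kk a) (hkkK a) hL
    show (Quotient.mk (rightCosetSetoid (zSub H)) (τ a)).out
      = (Quotient.mk (rightCosetSetoid (zSub H)) (τ b)).out
    apply hρc
    have e : τ a * (τ b)⁻¹ = cc b * (T (cc b) (kk a) * (T (cc b) (kk b))⁻¹) * (cc b)⁻¹ := by
      simp only [hτ]
      rw [← hca]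
      group
    rw [e]
    exact zSub_conj hz (cc b)
  have hsec : ∀ x : H, τ' x * x⁻¹ ∈ J := by
    intro x
    have h1 : τ' x * (τ x)⁻¹ ∈ J := zSub_le_closed hJ (hρ (τ x))
    have hl := hT1 (cc x) (kk x) (hkkK x)
    have hl2 : cc x * (T (cc x) (kk x) * (kk x)⁻¹) * (cc x)⁻¹ ∈ J :=
      ((hLmem (cc x) _).1 hl).2
    have h2 : τ x * x⁻¹ ∈ J := by
      have e : τ x * x⁻¹
          = (cc x * (T (cc x) (kk x) * (kk x)⁻¹) * (cc x)⁻¹) * ((cc x * kk x) * x⁻¹) := by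
        simp only [hτ]; group
      rw [e]
      exact J.mul_mem hl2 (hkkJ x)
    have e2 : τ' x * x⁻¹ = (τ' x * (τ x)⁻¹) * (τ x * x⁻¹) := by group
    rw [e2]
    exact J.mul_mem h1 h2
  have hcont : Continuous τ' := by
    rw [continuous_iff_continuousAt]
    intro x
    rw [ContinuousAt, Filter.tendsto_def]
    intro W hW
    obtain ⟨W1, hW1W, hW1o, hW1x⟩ := mem_nhds_iff.1 hW
    have hU0 : {w : H | τ' x * w ∈ W1} ∈ nhds (1 : H) := by
      apply IsOpen.mem_nhds (hW1o.preimage (continuous_const.mul continuous_id))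
      simpa using hW1x
    obtain ⟨N2, h2c, h2o, h2K, h2U⟩ := hbasis _ hU0
    obtain ⟨N3, h3c, h3o, h3K, h3p⟩ := hT3 (cc x) (kk x) (hkkK x) N2 h2c h2o h2K
    have hO : IsOpen {w : H | x⁻¹ * w ∈ (N3 : Set H)} :=
      h3o.preimage (continuous_const.mul continuous_id)
    apply Filter.mem_of_superset (hO.mem_nhds (by simpa using N3.one_mem))
    intro y hy
    have hn3' : x⁻¹ * y ∈ N3 := hy
    set n3 : H := x⁻¹ * y with hn3def
    have hyx : y = x * n3 := by rw [hn3def]; group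
    show τ' y ∈ W
    refine hW1W ?_
    have hcy : cc x = cc y := hc2 x y ⟨1, J.one_mem, n3, h3K hn3', by rw [hyx]; group⟩
    have hJy1 : (cc x * kk y) * y⁻¹ ∈ J := by rw [hcy]; exact hkkJ y
    have hJy2 : (cc x * (kk x * n3)) * y⁻¹ ∈ J := by
      have e : (cc x * (kk x * n3)) * y⁻¹ = (cc x * kk x) * x⁻¹ := by rw [hyx]; group
      rw [e]
      exact hkkJ x
    have hkxn3K : kk x * n3 ∈ K := K.mul_mem (hkkK x) (h3K hn3')
    have hL := hLrel (cc x) y y (kk y) (kk x * n3) (hkkK y) hkxn3K hJy1 hJy2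
      (by simpa using J.one_mem)
    have hz1 := hT2 (cc x) (kk x * n3) hkxn3K (kk y) (hkkK y) hL
    obtain ⟨z2, hz2, n2, hn2, he3⟩ := h3p n3 hn3'
    have hτy : τ y = cc x * T (cc x) (kk y) := by
      simp only [hτ]; rw [← hcy]
    have hτx : τ x = cc x * T (cc x) (kk x) := by simp only [hτ]
    set z1 : H := T (cc x) (kk y) * (T (cc x) (kk x * n3))⁻¹ with hz1def
    have hTk : T (cc x) (kk y) = z1 * T (cc x) (kk x * n3) := by rw [hz1def]; group
    have hA : τ y = (cc x * (z1 * z2) * (cc x)⁻¹) * τ x * n2 := by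
      rw [hτy, hTk, he3, hτx]; group
    have hz3m := hρ (τ y)
    have hz4m := hρ (τ x)
    have hfinal : τ' y = ((τ' y * (τ y)⁻¹) * (cc x * (z1 * z2) * (cc x)⁻¹)
        * (τ' x * (τ x)⁻¹)⁻¹) * (τ' x * n2) := by
      rw [hA]; group
    rw [hfinal]
    refine zSub_mul_mem ?_ hW1o (h2U hn2)
    exact (zSub H).mul_mem ((zSub H).mul_mem hz3m
      (zSub_conj ((zSub H).mul_mem hz1 hz2) (cc x))) ((zSub H).inv_mem hz4m)
  have hconst' : ∀ a b : H, (rightCosetSetoid J).r a b → τ' a = τ' b := hconst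
  refine ⟨Quotient.lift τ' hconst', hcont.quotient_lift hconst', ?_⟩
  intro q
  obtain ⟨x, rfl⟩ := Quotient.exists_rep q
  exact Quotient.sound (hsec x)
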